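/- (Kelley's theorem) Let 𝔹 be a Boolean algebra. Then 𝔹 ∖ {0} is the union of countably many subsets, each with positive intersection number, if and only if there exists a strictly positive finitely additive measure Ξ : 𝔹 → [0,1], i.e., Ξ(1) = 1, Ξ(a ∨ b) = Ξ(a) + Ξ(b) whenever a ∧ b = 0, and Ξ(b) = 0 iff b = 0. -/

import Mathlib

universe u

/-- `ι*(s)`: the largest cardinality of a set `e ⊆ n` such that `{s_i : i ∈ e}` has a
nonzero lower bound (equivalently, `inf_{i ∈ e} s_i ≠ ⊥`). -/
noncomputable def iotaStar {B : Type u} [BooleanAlgebra B] {n : ℕ} (s : Fin n → B) : ℕ :=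
  sSup { k | ∃ e : Finset (Fin n), e.card = k ∧ e.inf s ≠ ⊥ }

/-- `Q` has positive intersection number:
`int(Q) = inf { ι*(s)/n : s ∈ Q^n, 0 < n < ω } > 0`. -/
def PosIntersectionNumber {B : Type u} [BooleanAlgebra B] (Q : Set B) : Prop :=
  ∃ δ : ℝ, 0 < δ ∧ ∀ n : ℕ, 0 < n → ∀ s : Fin n → B, (∀ i, s i ∈ Q) →
    δ ≤ (iotaStar s : ℝ) / (n : ℝ)


noncomputable section

namespace KelleyAux

variable {B : Type u} [BooleanAlgebra B]

/-- "atoms" of the finite subalgebra generated by a list. -/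
def atomsList : List B → List B
  | [] => [⊤]
  | a :: l => (atomsList l).flatMap (fun x => [x ⊓ a, x ⊓ aᶜ])

lemma atomsList_dichotomy : ∀ (l : List B), ∀ x ∈ atomsList l, ∀ a ∈ l, x ≤ a ∨ x ≤ aᶜ := by
  intro l
  induction l with
  | nil => intro x hx a ha; simp at ha
  | cons a l ih =>
    intro x hx b hb
    simp only [atomsList, List.mem_flatMap, List.mem_cons, List.mem_singleton] at hx
    obtain ⟨y, hy, hxy⟩ := hx
    rw [List.mem_cons] at hb
    have hxy' : x = y ⊓ a ∨ x = y ⊓ aᶜ := by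
      rcases hxy with h | h | h
      · exact Or.inl h
      · exact Or.inr h
      · exact absurd h (by simp)
    rcases hb with rfl | hb
    · rcases hxy' with rfl | rfl
      · exact Or.inl inf_le_right
      · exact Or.inr inf_le_right
    · have hy' := ih y hy b hb
      rcases hxy' with rfl | rfl
      · exact hy'.imp (le_trans inf_le_left) (le_trans inf_le_left)
      · exact hy'.imp (le_trans inf_le_left) (le_trans inf_le_left)

lemma exists_atom_inf_ne_bot : ∀ (l : List B) (b : B), b ≠ ⊥ →
    ∃ x ∈ atomsList l, x ⊓ b ≠ ⊥ := by
  intro l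
  induction l with
  | nil => intro b hb; exact ⟨⊤, by simp [atomsList], by simpa using hb⟩
  | cons a l ih =>
    intro b hb
    obtain ⟨x, hx, hxb⟩ := ih b hb
    have hsplit : ((x ⊓ a) ⊓ b) ⊔ ((x ⊓ aᶜ) ⊓ b) = x ⊓ b := by
      rw [← inf_sup_right, ← inf_sup_left]
      simp
    by_cases h1 : (x ⊓ a) ⊓ b = ⊥
    · refine ⟨x ⊓ aᶜ, ?_, ?_⟩
      · simp only [atomsList, List.mem_flatMap]; exact ⟨x, hx, by simp⟩
      · intro h2; apply hxb; rw [← hsplit, h1, h2, sup_idem]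
    · refine ⟨x ⊓ a, ?_, h1⟩
      simp only [atomsList, List.mem_flatMap]; exact ⟨x, hx, by simp⟩

/-- splitting a finitely additive measure along partial atoms -/
lemma sum_atomsList_map (μ : B → ℝ)
    (hadd : ∀ a b, a ⊓ b = ⊥ → μ (a ⊔ b) = μ a + μ b) :
    ∀ (l : List B) (b : B), ((atomsList l).map (fun x => μ (b ⊓ x))).sum = μ b := by
  have hsplit : ∀ c a : B, μ c = μ (c ⊓ a) + μ (c ⊓ aᶜ) := by
    intro c a
    have h1 : (c ⊓ a) ⊓ (c ⊓ aᶜ) = ⊥ := by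
      rw [inf_inf_inf_comm]; simp
    have h2 : (c ⊓ a) ⊔ (c ⊓ aᶜ) = c := by rw [← inf_sup_left]; simp
    rw [← h2, hadd _ _ h1, h2]
  intro l
  induction l with
  | nil => intro b; simp [atomsList]
  | cons a l ih =>
    intro b
    simp only [atomsList]
    rw [List.map_flatMap, List.flatMap, List.sum_flatten, List.map_map]
    have : ∀ x : B, ((fun x => [x ⊓ a, x ⊓ aᶜ]).comp (id) x |>.map (fun y => μ (b ⊓ y))).sum
        = μ (b ⊓ x) := by
      intro x
      simp only [Function.comp, List.map_cons, List.map_nil, List.sum_cons, List.sum_nil,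
        add_zero]
      rw [← inf_assoc, ← inf_assoc]
      exact (hsplit (b ⊓ x) a).symm
    calc ((atomsList l).map fun x => (([x ⊓ a, x ⊓ aᶜ]).map (fun y => μ (b ⊓ y))).sum).sum
        = ((atomsList l).map fun x => μ (b ⊓ x)).sum := by
          apply congrArg
          apply List.map_congr_left
          intro x _
          simpa using this x
      _ = μ b := ih b

section Back
variable {B : Type u} [BooleanAlgebra B] [Nontrivial B]

open Finset in
lemma measure_to_bound (μ : B → ℝ) (hIcc : ∀ b, μ b ∈ Set.Icc (0:ℝ) 1) (htop : μ ⊤ = 1)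
    (hadd : ∀ a b, a ⊓ b = ⊥ → μ (a ⊔ b) = μ a + μ b)
    (c : ℝ) (m : ℕ) (hm : 0 < m) (s : Fin m → B) (hs : ∀ i, c ≤ μ (s i)) :
    c ≤ (iotaStar s : ℝ) / (m : ℝ) := by
  classical
  have hbot : μ ⊥ = 0 := by
    have := hadd ⊥ ⊥ (by simp)
    simp at this; linarith
  set l : List B := List.ofFn s with hl
  set A : List B := atomsList l with hA
  set k := A.length with hk
  set x : Fin k → B := A.get with hx
  have hAx : A = List.ofFn x := (List.ofFn_get A).symm
  have listsum : ∀ f : B → ℝ, (A.map f).sum = ∑ j : Fin k, f (x j) := by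
    intro f
    rw [hAx, List.map_ofFn, List.sum_ofFn]
    rfl
  have h1 : ∑ j : Fin k, μ (x j) = 1 := by
    have := sum_atomsList_map μ hadd l ⊤
    rw [show (fun y => μ (⊤ ⊓ y)) = μ by funext y; rw [top_inf_eq], listsum] at this
    rw [this, htop]
  have h2 : ∀ i : Fin m, μ (s i) = ∑ j : Fin k, (if x j ≤ s i then μ (x j) else 0) := by
    intro i
    have hmem : s i ∈ l := by rw [hl, List.mem_ofFn]; exact ⟨i, rfl⟩
    have := sum_atomsList_map μ hadd l (s i)
    rw [← this, ← listsum (fun y => if y ≤ s i then μ y else 0)]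
    apply congrArg
    apply List.map_congr_left
    intro y hy
    by_cases hle : y ≤ s i
    · rw [if_pos hle, inf_eq_right.mpr hle]
    · rw [if_neg hle]
      rcases atomsList_dichotomy l y hy (s i) hmem with h | h
      · exact absurd h hle
      · have : s i ⊓ y = ⊥ := by
          rw [eq_bot_iff]
          calc s i ⊓ y ≤ s i ⊓ (s i)ᶜ := inf_le_inf_left _ h
          _ = ⊥ := by simp
        rw [this, hbot]
  -- counting
  set cnt : Fin k → ℕ := fun j => (univ.filter (fun i => x j ≤ s i)).card with hcnt
  have h3 : ∑ i : Fin m, μ (s i) = ∑ j : Fin k, μ (x j) * (cnt j : ℝ) := by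
    calc ∑ i : Fin m, μ (s i)
        = ∑ i : Fin m, ∑ j : Fin k, (if x j ≤ s i then μ (x j) else 0) := by
          exact Finset.sum_congr rfl (fun i _ => h2 i)
      _ = ∑ j : Fin k, ∑ i : Fin m, (if x j ≤ s i then μ (x j) else 0) := Finset.sum_comm
      _ = ∑ j : Fin k, μ (x j) * (cnt j : ℝ) := by
          apply Finset.sum_congr rfl
          intro j _
          rw [← Finset.sum_filter, Finset.sum_const, nsmul_eq_mul, mul_comm]
  have hcm : c * m ≤ ∑ j : Fin k, μ (x j) * (cnt j : ℝ) := by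
    rw [← h3]
    calc c * m = ∑ _i : Fin m, c := by rw [Finset.sum_const, card_univ, Fintype.card_fin,
          nsmul_eq_mul, mul_comm]
    _ ≤ ∑ i : Fin m, μ (s i) := Finset.sum_le_sum (fun i _ => hs i)
  -- find a good atom
  have hex : ∃ j : Fin k, μ (x j) ≠ 0 ∧ c * m ≤ (cnt j : ℝ) := by
    by_contra hcon
    push_neg at hcon
    have hj0 : ∃ j : Fin k, 0 < μ (x j) := by
      have : (0:ℝ) < 1 := one_pos
      rw [← h1] at this
      obtain ⟨j, _, hj⟩ := Finset.exists_lt_of_sum_lt (by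
        simpa using this : ∑ _j : Fin k, (0:ℝ) < ∑ j : Fin k, μ (x j))
      exact ⟨j, hj⟩
    obtain ⟨j0, hj0⟩ := hj0
    have hlt : ∑ j : Fin k, μ (x j) * (cnt j : ℝ) < ∑ j : Fin k, μ (x j) * (c * m) := by
      apply Finset.sum_lt_sum
      · intro j _
        by_cases hz : μ (x j) = 0
        · rw [hz]; simp
        · have h := hcon j hz
          exact le_of_lt (mul_lt_mul_of_pos_left h (lt_of_le_of_ne (hIcc (x j)).1 (Ne.symm hz)))
      · exact ⟨j0, Finset.mem_univ _, mul_lt_mul_of_pos_left (hcon j0 (ne_of_gt hj0)) hj0⟩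
    rw [← Finset.sum_mul, h1, one_mul] at hlt
    linarith
  obtain ⟨j, hjne, hjcnt⟩ := hex
  have hxj : x j ≠ ⊥ := fun h => hjne (h ▸ hbot)
  set e : Finset (Fin m) := univ.filter (fun i => x j ≤ s i) with he
  have hinf : x j ≤ e.inf s := Finset.le_inf (fun i hi => (Finset.mem_filter.mp hi).2)
  have hne : e.inf s ≠ ⊥ := fun h => hxj (le_bot_iff.mp (h ▸ hinf))
  have hmemset : e.card ∈ { k | ∃ e' : Finset (Fin m), e'.card = k ∧ e'.inf s ≠ ⊥ } :=
    ⟨e, rfl, hne⟩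
  have hbdd : BddAbove { k | ∃ e' : Finset (Fin m), e'.card = k ∧ e'.inf s ≠ ⊥ } := by
    refine ⟨m, ?_⟩
    rintro k' ⟨e', rfl, -⟩
    simpa using Finset.card_le_univ e'
  have hiota : e.card ≤ iotaStar s := le_csSup hbdd hmemset
  have : c * m ≤ (iotaStar s : ℝ) := le_trans hjcnt (by exact_mod_cast hiota)
  rw [le_div_iff₀ (by exact_mod_cast hm)]
  linarith

end Back

end KelleyAux

namespace KelleyAux

lemma backward_dir {B : Type u} [BooleanAlgebra B] [Nontrivial B]
    (Ξ : B → ℝ) (hIcc : ∀ b, Ξ b ∈ Set.Icc (0 : ℝ) 1) (htop : Ξ ⊤ = 1)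
    (hadd : ∀ a b, a ⊓ b = ⊥ → Ξ (a ⊔ b) = Ξ a + Ξ b)
    (hpos : ∀ b, Ξ b = 0 ↔ b = ⊥) :
    ∃ Q : ℕ → Set B, (⋃ n, Q n) = { b : B | b ≠ ⊥ } ∧ ∀ n, PosIntersectionNumber (Q n) := by
  refine ⟨fun n => {b | 1 / ((n : ℝ) + 1) ≤ Ξ b}, ?_, ?_⟩
  · ext b
    simp only [Set.mem_iUnion, Set.mem_setOf_eq]
    constructor
    · rintro ⟨n, hn⟩ hb
      rw [(hpos b).mpr hb] at hn
      have : (0:ℝ) < 1 / ((n:ℝ) + 1) := by positivity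
      linarith
    · intro hb
      have h0 : 0 < Ξ b := lt_of_le_of_ne (hIcc b).1 (Ne.symm (fun h => hb ((hpos b).mp h)))
      obtain ⟨n, hn⟩ := exists_nat_one_div_lt h0
      exact ⟨n, le_of_lt hn⟩
  · intro n
    refine ⟨1 / ((n : ℝ) + 1), by positivity, ?_⟩
    intro m hm s hsmem
    exact measure_to_bound Ξ hIcc htop hadd _ m hm s hsmem

end KelleyAux

namespace KelleyAux

set_option maxHeartbeats 1000000 in
open Finset in
lemma lp_feasible {ι : Type u} {κ : Type u} [Fintype ι] [Fintype κ] [Nonempty ι] [Nonempty κ]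
    (R : ι → κ → Prop) [∀ z q, Decidable (R z q)] (δ : ℝ) (hδ : 0 < δ)
    (hcc : ∀ cc : κ → ℕ, 0 < ∑ q, cc q →
      ∃ z : ι, δ * ((∑ q, cc q : ℕ) : ℝ) ≤ ∑ q, (if R z q then (cc q : ℝ) else 0)) :
    ∃ w : ι → ℝ, (∀ x, 0 ≤ w x) ∧ (∑ x, w x) = 1 ∧
      ∀ q : κ, δ ≤ ∑ x, (if R x q then w x else 0) := by
  classical
  set v : ι → (κ → ℝ) := fun z q => if R z q then 1 else 0 with hv
  set Tm : (ι → ℝ) →ₗ[ℝ] (κ → ℝ) :=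
    { toFun := fun w => ∑ x : ι, w x • v x
      map_add' := fun w1 w2 => by
        simp only [Pi.add_apply, add_smul]
        rw [Finset.sum_add_distrib]
      map_smul' := fun c w => by
        simp only [Pi.smul_apply, smul_eq_mul, RingHom.id_apply, mul_smul]
        rw [Finset.smul_sum] } with hTm
  have key : ∃ w ∈ stdSimplex ℝ ι, ∀ q : κ, δ ≤ Tm w q := by
    by_contra hcon
    push_neg at hcon
    set D := {y : κ → ℝ | ∀ q, δ ≤ y q} with hD
    have hdisj : Disjoint (Tm '' stdSimplex ℝ ι) D := by
      rw [Set.disjoint_left]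
      rintro y ⟨w, hw, rfl⟩ hyD
      obtain ⟨q, hq⟩ := hcon w hw
      exact absurd (hyD q) (not_le.mpr hq)
    have hDcvx : Convex ℝ D := by
      intro y1 h1 y2 h2 a b ha hb hab
      intro q
      have e1 := h1 q
      have e2 := h2 q
      simp only [Pi.add_apply, Pi.smul_apply, smul_eq_mul]
      nlinarith [mul_le_mul_of_nonneg_left e1 ha, mul_le_mul_of_nonneg_left e2 hb]
    have hDcl : IsClosed D := by
      have hDeq : D = ⋂ q : κ, {y : κ → ℝ | δ ≤ y q} := by
        ext y; simp [hD, Set.mem_iInter]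
      rw [hDeq]
      exact isClosed_iInter fun q => isClosed_le continuous_const (continuous_apply q)
    obtain ⟨f, u, vv, hfK, huv, hfD⟩ :=
      geometric_hahn_banach_compact_closed
        ((convex_stdSimplex ℝ ι).linear_image (Tm : (ι → ℝ) →ₗ[ℝ] (κ → ℝ)))
        ((isCompact_stdSimplex ℝ ι).image Tm.continuous_of_finiteDimensional)
        hDcvx hDcl hdisj
    set lam : κ → ℝ := fun q => f (fun j => if q = j then (1:ℝ) else 0) with hlam
    have hfy : ∀ y : κ → ℝ, f y = ∑ q : κ, y q * lam q := by
      intro y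
      conv_lhs => rw [pi_eq_sum_univ y]
      rw [map_sum]
      apply Finset.sum_congr rfl
      intro q _
      rw [map_smul, smul_eq_mul, hlam]
    have hconstδ : (fun _ : κ => δ) ∈ D := fun q => le_refl δ
    have hδsum : vv < δ * ∑ q : κ, lam q := by
      have h := hfD _ hconstδ
      rw [hfy, ← Finset.mul_sum] at h
      exact h
    have hlamnn : ∀ q, 0 ≤ lam q := by
      intro q0
      by_contra hneg
      push_neg at hneg
      set c : ℝ := (δ * (∑ q : κ, lam q) - vv + 1) / (-lam q0) with hc
      have hcpos : 0 < c := div_pos (by linarith) (by linarith)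
      have hmem : (fun q => δ + (if q = q0 then c else 0)) ∈ D := by
        intro q
        by_cases h : q = q0 <;> simp [h] <;> linarith
      have h := hfD _ hmem
      rw [hfy] at h
      have hexp : ∑ q : κ, (δ + if q = q0 then c else 0) * lam q
          = δ * (∑ q : κ, lam q) + c * lam q0 := by
        rw [show (fun q : κ => (δ + if q = q0 then c else 0) * lam q)
            = (fun q : κ => δ * lam q + (if q = q0 then c * lam q else 0)) by
          funext q; by_cases h : q = q0 <;> simp [h] <;> ring]
        rw [Finset.sum_add_distrib, ← Finset.mul_sum,
          Finset.sum_ite_eq' Finset.univ q0 (fun q => c * lam q)]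
        simp
      rw [hexp] at h
      have e2 : c * (-lam q0) = δ * (∑ q : κ, lam q) - vv + 1 :=
        div_mul_cancel₀ _ (by linarith)
      nlinarith
    have hΛnn : 0 ≤ ∑ q : κ, lam q := Finset.sum_nonneg fun q _ => hlamnn q
    have hptmass : ∀ z : ι, (fun x : ι => if x = z then (1:ℝ) else 0) ∈ stdSimplex ℝ ι := by
      intro z
      constructor
      · intro x; positivity
      · rw [Finset.sum_ite_eq' Finset.univ z (fun _ => (1:ℝ))]
        simp
    have hTmpt : ∀ z : ι, Tm (fun x : ι => if x = z then (1:ℝ) else 0) = v z := by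
      intro z
      show ∑ x : ι, (if x = z then (1:ℝ) else 0) • v x = v z
      rw [show (fun x : ι => (if x = z then (1:ℝ) else 0) • v x)
          = (fun x : ι => if x = z then v x else 0) by
        funext x; by_cases h : x = z <;> simp [h]]
      rw [Finset.sum_ite_eq' Finset.univ z (fun x : ι => v x)]
      simp
    have hΛpos : 0 < ∑ q : κ, lam q := by
      rcases eq_or_lt_of_le hΛnn with heq | h
      · exfalso
        obtain ⟨z0⟩ := (inferInstance : Nonempty ι)
        have hall : ∀ q ∈ Finset.univ, lam q = 0 :=
          (Finset.sum_eq_zero_iff_of_nonneg (fun q _ => hlamnn q)).mp heq.symm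
        have h0 : f (Tm (fun x : ι => if x = z0 then (1:ℝ) else 0)) < u :=
          hfK _ ⟨_, hptmass _, rfl⟩
        rw [hfy] at h0
        have hz : ∑ q : κ, Tm (fun x : ι => if x = z0 then (1:ℝ) else 0) q * lam q = 0 := by
          apply Finset.sum_eq_zero
          intro q hq
          rw [hall q hq, mul_zero]
        rw [hz] at h0
        have : δ * ∑ q : κ, lam q = 0 := by rw [← heq, mul_zero]
        linarith
      · exact h
    have hatom : ∀ z : ι, ∑ q : κ, (if R z q then lam q else 0)
        < δ * ∑ q : κ, lam q := by
      intro z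
      have h0 : f (Tm (fun x : ι => if x = z then (1:ℝ) else 0)) < u :=
        hfK _ ⟨_, hptmass z, rfl⟩
      rw [hTmpt z, hfy] at h0
      have heq2 : ∑ q : κ, v z q * lam q = ∑ q : κ, (if R z q then lam q else 0) := by
        apply Finset.sum_congr rfl
        intro q _
        rw [hv]
        by_cases h : R z q <;> simp [h]
      rw [heq2] at h0
      linarith
    -- normalization
    set Λ : ℝ := ∑ q : κ, lam q with hΛ
    set lam' : κ → ℝ := fun q => lam q / Λ with hlam'
    have hlam'nn : ∀ q, 0 ≤ lam' q := fun q => div_nonneg (hlamnn q) (le_of_lt hΛpos)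
    have hlam'sum : ∑ q : κ, lam' q = 1 := by
      rw [hlam', ← Finset.sum_div]
      exact div_self (ne_of_gt hΛpos)
    set gval : ι → ℝ := fun z => ∑ q : κ, (if R z q then lam' q else 0) with hg
    have hgδ : ∀ z : ι, gval z < δ := by
      intro z
      rw [hg]
      simp only
      have : ∑ q : κ, (if R z q then lam' q else 0)
          = (∑ q : κ, (if R z q then lam q else 0)) / Λ := by
        rw [Finset.sum_div]
        apply Finset.sum_congr rfl
        intro q _
        by_cases h : R z q <;> simp [h, hlam']
      rw [this, div_lt_iff₀ hΛpos]
      nlinarith [hatom z]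
    -- choose N
    set M : ℝ := Finset.univ.sup' Finset.univ_nonempty gval with hM
    have hMδ : M < δ := (Finset.sup'_lt_iff Finset.univ_nonempty).mpr fun z _ => hgδ z
    have hgM : ∀ z : ι, gval z ≤ M := fun z => Finset.le_sup' gval (Finset.mem_univ z)
    set η : ℝ := δ - M with hη
    have hηpos : 0 < η := by rw [hη]; linarith
    set N : ℕ := ⌈(Fintype.card κ : ℝ) / η⌉₊ + 1 with hN
    have hN1 : 1 ≤ N := Nat.le_add_left 1 _
    have hNf : (Fintype.card κ : ℝ) < N * η := by
      have h1 : (Fintype.card κ : ℝ) / η ≤ (⌈(Fintype.card κ : ℝ) / η⌉₊ : ℝ) := Nat.le_ceil _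
      have h2 : ((⌈(Fintype.card κ : ℝ) / η⌉₊ : ℕ) : ℝ) < (N : ℝ) := by
        rw [hN]; push_cast; linarith
      rw [div_le_iff₀ hηpos] at h1
      nlinarith
    set cc : κ → ℕ := fun q => ⌈(N:ℝ) * lam' q⌉₊ with hccdef
    have hc1 : ∀ q, (N:ℝ) * lam' q ≤ cc q := fun q => Nat.le_ceil _
    have hc2 : ∀ q, (cc q:ℝ) < (N:ℝ) * lam' q + 1 := fun q =>
      Nat.ceil_lt_add_one (mul_nonneg (by positivity) (hlam'nn q))
    have hmcast : ((∑ q : κ, cc q : ℕ) : ℝ) = ∑ q : κ, (cc q : ℝ) := by push_cast; rfl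
    have hmN : (N : ℝ) ≤ ((∑ q : κ, cc q : ℕ) : ℝ) := by
      rw [hmcast]
      calc (N:ℝ) = ∑ q : κ, (N:ℝ) * lam' q := by
            rw [← Finset.mul_sum, hlam'sum, mul_one]
      _ ≤ ∑ q : κ, (cc q : ℝ) := Finset.sum_le_sum fun q _ => hc1 q
    have hmpos : 0 < ∑ q : κ, cc q := by
      have h1 : (1:ℝ) ≤ ((∑ q : κ, cc q : ℕ) : ℝ) :=
        le_trans (by exact_mod_cast hN1) hmN
      have h2 : 1 ≤ ∑ q : κ, cc q := by exact_mod_cast h1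
      omega
    obtain ⟨z, hz⟩ := hcc cc hmpos
    -- final contradiction
    have hCx : ∑ q : κ, (if R z q then (cc q : ℝ) else 0)
        ≤ (N:ℝ) * gval z + (Fintype.card κ : ℝ) := by
      have h1 : ∑ q : κ, (if R z q then (cc q : ℝ) else 0)
          ≤ ∑ q : κ, ((N:ℝ) * (if R z q then lam' q else 0)
              + (if R z q then (1:ℝ) else 0)) := by
        apply Finset.sum_le_sum
        intro q _
        by_cases h : R z q <;> simp [h]
        exact le_of_lt (hc2 q)
      have h2 : ∑ q : κ, ((N:ℝ) * (if R z q then lam' q else 0)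
              + (if R z q then (1:ℝ) else 0))
          = (N:ℝ) * gval z + ∑ q : κ, (if R z q then (1:ℝ) else 0) := by
        rw [Finset.sum_add_distrib, ← Finset.mul_sum, hg]
      have h3 : ∑ q : κ, (if R z q then (1:ℝ) else 0) ≤ (Fintype.card κ : ℝ) := by
        calc ∑ q : κ, (if R z q then (1:ℝ) else 0) ≤ ∑ _q : κ, (1:ℝ) := by
              apply Finset.sum_le_sum
              intro q _
              by_cases h : R z q <;> simp [h]
        _ = (Fintype.card κ : ℝ) := by
              rw [Finset.sum_const, Finset.card_univ]
              simp
      linarith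
    have hfinal : (N:ℝ) * gval z + (Fintype.card κ : ℝ) < (N:ℝ) * δ := by
      have h1 : (N:ℝ) * gval z ≤ (N:ℝ) * M :=
        mul_le_mul_of_nonneg_left (hgM z) (by positivity)
      have h2 : (N:ℝ) * η = (N:ℝ) * δ - (N:ℝ) * M := by rw [hη]; ring
      linarith
    have hNδ : (N:ℝ) * δ ≤ δ * ((∑ q : κ, cc q : ℕ) : ℝ) := by
      rw [mul_comm]
      exact mul_le_mul_of_nonneg_left hmN (le_of_lt hδ)
    linarith
  obtain ⟨w, hw, hwq⟩ := key
  refine ⟨w, hw.1, hw.2, ?_⟩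
  intro q
  have h := hwq q
  have hTmq : Tm w q = ∑ x : ι, (if R x q then w x else 0) := by
    show (∑ x : ι, w x • v x) q = _
    rw [Finset.sum_apply]
    apply Finset.sum_congr rfl
    intro x _
    rw [hv]
    by_cases hle : R x q <;> simp [hle]
  rw [hTmq] at h
  exact h

variable {B : Type u} [BooleanAlgebra B]

set_option maxHeartbeats 1000000 in
open Finset in
lemma finite_measure [Nontrivial B] (Q : Set B) (δ : ℝ)
    (hδ : 0 < δ)
    (hQ : ∀ n : ℕ, 0 < n → ∀ s : Fin n → B, (∀ i, s i ∈ Q) → δ ≤ (iotaStar s : ℝ) / (n : ℝ))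
    (t : Finset B) :
    ∃ μ : B → ℝ, (∀ b, μ b ∈ Set.Icc (0:ℝ) 1) ∧ μ ⊤ = 1 ∧
      (∀ a b, a ∈ t → b ∈ t → a ⊓ b = ⊥ → μ (a ⊔ b) = μ a + μ b) ∧
      (∀ q ∈ t, q ∈ Q → δ ≤ μ q) := by
  classical
  set l : List B := t.toList with hl
  set S : Finset B := (atomsList l).toFinset.erase ⊥ with hS
  obtain ⟨x₀, hx₀A, hx₀ne'⟩ := exists_atom_inf_ne_bot l ⊤ (top_ne_bot)
  have hx₀ne : x₀ ≠ ⊥ := by intro h; rw [h] at hx₀ne'; simp at hx₀ne'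
  have hx₀S : x₀ ∈ S := Finset.mem_erase.mpr ⟨hx₀ne, List.mem_toFinset.mpr hx₀A⟩
  have hSprop : ∀ x ∈ S, x ≠ ⊥ ∧ ∀ a ∈ t, x ≤ a ∨ x ≤ aᶜ := by
    intro x hx
    rw [Finset.mem_erase] at hx
    exact ⟨hx.1, fun a ha =>
      atomsList_dichotomy l x (List.mem_toFinset.mp hx.2) a (Finset.mem_toList.mpr ha)⟩
  have claim : ∃ w : B → ℝ, (∀ y, 0 ≤ w y) ∧ (∑ x ∈ S, w x) = 1 ∧
      ∀ q ∈ t, q ∈ Q → δ ≤ ∑ x ∈ S, (if x ≤ q then w x else 0) := by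
    set F : Finset B := t.filter (· ∈ Q) with hF
    have hFmem : ∀ q ∈ F, q ∈ t ∧ q ∈ Q := by
      intro q hq
      rw [hF, Finset.mem_filter] at hq
      exact hq
    rcases Finset.eq_empty_or_nonempty F with hFe | hFne
    · refine ⟨fun y => if y = x₀ then 1 else 0, fun y => by positivity, ?_, ?_⟩
      · rw [Finset.sum_ite_eq' S x₀ (fun _ => (1:ℝ))]
        rw [if_pos hx₀S]
      · intro q hq hqQ
        have hqF : q ∈ F := Finset.mem_filter.mpr ⟨hq, hqQ⟩
        rw [hFe] at hqF
        exact absurd hqF (Finset.notMem_empty q)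
    · haveI hιne : Nonempty {x // x ∈ S} := ⟨⟨x₀, hx₀S⟩⟩
      haveI hκne : Nonempty {q // q ∈ F} := ⟨⟨hFne.choose, hFne.choose_spec⟩⟩
      have hcc : ∀ cc : {q // q ∈ F} → ℕ, 0 < ∑ q, cc q →
          ∃ z : {x // x ∈ S}, δ * ((∑ q, cc q : ℕ) : ℝ)
            ≤ ∑ q : {q // q ∈ F}, (if (z : B) ≤ (q : B) then (cc q : ℝ) else 0) := by
        intro cc hmpos
        have hcard : Fintype.card ((q : {q // q ∈ F}) × Fin (cc q)) = ∑ q, cc q := by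
          rw [Fintype.card_sigma]
          simp
        set eqv : ((q : {q // q ∈ F}) × Fin (cc q)) ≃ Fin (∑ q, cc q) :=
          Fintype.equivFinOfCardEq hcard with heqv
        set s : Fin (∑ q, cc q) → B := fun i => (((eqv.symm i).1 : {q // q ∈ F}) : B) with hs
        have hsQ : ∀ i, s i ∈ Q := fun i => (hFmem _ (eqv.symm i).1.2).2
        have hbound := hQ _ hmpos s hsQ
        have hbdd : BddAbove { k | ∃ e' : Finset (Fin (∑ q, cc q)), e'.card = k ∧ e'.inf s ≠ ⊥ } := by
          refine ⟨∑ q, cc q, ?_⟩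
          rintro k' ⟨e', rfl, -⟩
          exact (Finset.card_le_univ e').trans_eq (Fintype.card_fin _)
        have hmemset := Nat.sSup_mem
          (⟨0, ⟨(∅ : Finset (Fin (∑ q, cc q))), Finset.card_empty, by rw [Finset.inf_empty]; exact top_ne_bot⟩⟩ :
            { k | ∃ e' : Finset (Fin (∑ q, cc q)), e'.card = k ∧ e'.inf s ≠ ⊥ }.Nonempty) hbdd
        obtain ⟨e, hecard, heinf⟩ := hmemset
        have hιm : δ * ((∑ q, cc q : ℕ) : ℝ) ≤ (iotaStar s : ℝ) := by
          rw [le_div_iff₀ (by exact_mod_cast hmpos)] at hbound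
          linarith
        obtain ⟨x, hxA, hxinf⟩ := exists_atom_inf_ne_bot l (e.inf s) heinf
        have hxne : x ≠ ⊥ := by intro h; rw [h] at hxinf; simp at hxinf
        have hxS : x ∈ S := Finset.mem_erase.mpr ⟨hxne, List.mem_toFinset.mpr hxA⟩
        have hles : ∀ i ∈ e, x ≤ s i := by
          intro i hi
          have hsit : s i ∈ t := (hFmem _ (eqv.symm i).1.2).1
          rcases atomsList_dichotomy l x hxA (s i) (Finset.mem_toList.mpr hsit) with h | h
          · exact h
          · exfalso
            apply hxinf
            rw [eq_bot_iff]
            calc x ⊓ e.inf s ≤ x ⊓ s i := inf_le_inf_left x (Finset.inf_le hi)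
            _ ≤ (s i)ᶜ ⊓ s i := inf_le_inf_right _ h
            _ = ⊥ := by simp
        have h2 : (Finset.univ.filter (fun i : Fin (∑ q, cc q) => x ≤ s i)).card
            = ∑ q : {q // q ∈ F}, (if x ≤ (q : B) then cc q else 0) := by
          rw [Finset.card_filter]
          rw [← Equiv.sum_comp eqv (fun i => if x ≤ s i then 1 else 0)]
          have hsj : ∀ j : (q : {q // q ∈ F}) × Fin (cc q), s (eqv j) = (j.1 : B) := by
            intro j
            rw [hs]
            simp
            exact congrArg (fun p => p.1) (eqv.symm_apply_apply j)
          rw [show (fun j : (q : {q // q ∈ F}) × Fin (cc q) => if x ≤ s (eqv j) then 1 else 0)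
              = (fun j : (q : {q // q ∈ F}) × Fin (cc q) => if x ≤ (j.1 : B) then 1 else 0) by
            funext j; rw [hsj j]]
          rw [← Finset.univ_sigma_univ, Finset.sum_sigma]
          apply Finset.sum_congr rfl
          intro q _
          by_cases h : x ≤ (q : B) <;> simp [h]
        have h1 : e.card ≤ (Finset.univ.filter (fun i : Fin (∑ q, cc q) => x ≤ s i)).card :=
          Finset.card_le_card
            (fun i hi => Finset.mem_filter.mpr ⟨Finset.mem_univ _, hles i hi⟩)
        refine ⟨⟨x, hxS⟩, ?_⟩
        have hcast : ((∑ q : {q // q ∈ F}, (if x ≤ (q : B) then cc q else 0) : ℕ) : ℝ)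
            = ∑ q : {q // q ∈ F}, (if x ≤ (q : B) then (cc q : ℝ) else 0) := by
          push_cast [apply_ite (fun n : ℕ => (n : ℝ))]
          rfl
        calc δ * ((∑ q, cc q : ℕ) : ℝ) ≤ (iotaStar s : ℝ) := hιm
        _ = (e.card : ℝ) := by exact_mod_cast hecard.symm
        _ ≤ ((∑ q : {q // q ∈ F}, (if x ≤ (q : B) then cc q else 0) : ℕ) : ℝ) := by
            exact_mod_cast le_trans h1 (le_of_eq h2)
        _ = _ := hcast
      obtain ⟨w, hwnn, hwsum, hwR⟩ :=
        lp_feasible (fun (z : {x // x ∈ S}) (q : {q // q ∈ F}) => (z : B) ≤ (q : B)) δ hδ hcc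
      refine ⟨fun y => if h : y ∈ S then w ⟨y, h⟩ else 0, ?_, ?_, ?_⟩
      · intro y
        by_cases h : y ∈ S <;> simp [h, hwnn]
      · rw [← Finset.sum_attach S (fun y => if h : y ∈ S then w ⟨y, h⟩ else 0)]
        have heach : ∀ x : {y // y ∈ S}, (if h : (x : B) ∈ S then w ⟨(x : B), h⟩ else 0) = w x := by
          intro x
          rw [dif_pos x.2]
        rw [Finset.sum_congr rfl (fun x _ => heach x), ← Finset.univ_eq_attach]
        exact hwsum
      · intro q hq hqQ
        have hqF : q ∈ F := Finset.mem_filter.mpr ⟨hq, hqQ⟩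
        have h := hwR ⟨q, hqF⟩
        have heq : ∑ x : {x // x ∈ S}, (if (x : B) ≤ q then w x else 0)
            = ∑ x ∈ S, (if x ≤ q then (if h : x ∈ S then w ⟨x, h⟩ else 0) else 0) := by
          rw [← Finset.sum_attach S
            (fun y => if y ≤ q then (if h : y ∈ S then w ⟨y, h⟩ else 0) else 0),
            ← Finset.univ_eq_attach]
          apply Finset.sum_congr rfl
          intro x _
          by_cases hle : (x : B) ≤ q <;> simp [hle, dif_pos x.2]
        rw [heq] at h
        exact h
  obtain ⟨w, hwnn, hwsum, hwq⟩ := claim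
  refine ⟨fun b => ∑ x ∈ S, (if x ≤ b then w x else 0), ?_, ?_, ?_, ?_⟩
  · intro b
    constructor
    · apply Finset.sum_nonneg; intro x _
      by_cases h : x ≤ b <;> simp [h, hwnn x]
    · rw [← hwsum]
      apply Finset.sum_le_sum; intro x _
      by_cases h : x ≤ b <;> simp [h, hwnn x]
  · rw [← hwsum]; apply Finset.sum_congr rfl; intro x _; rw [if_pos le_top]
  · intro a b ha hb hab
    rw [← Finset.sum_add_distrib]
    apply Finset.sum_congr rfl
    intro x hx
    obtain ⟨hxne, hdich⟩ := hSprop x hx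
    by_cases hxa : x ≤ a
    · have hxb : ¬ x ≤ b := fun h => hxne (le_bot_iff.mp (hab ▸ le_inf hxa h))
      rw [if_pos (le_trans hxa le_sup_left), if_pos hxa, if_neg hxb, add_zero]
    · by_cases hxb : x ≤ b
      · rw [if_pos (le_trans hxb le_sup_right), if_neg hxa, if_pos hxb, zero_add]
      · have h1 : x ≤ aᶜ := (hdich a ha).resolve_left hxa
        have h2 : x ≤ bᶜ := (hdich b hb).resolve_left hxb
        have h3 : ¬ x ≤ a ⊔ b := by
          intro h
          apply hxne
          rw [← le_bot_iff]
          calc x ≤ (a ⊔ b) ⊓ (aᶜ ⊓ bᶜ) := le_inf h (le_inf h1 h2)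
          _ = ⊥ := by rw [← compl_sup]; exact inf_compl_eq_bot
        rw [if_neg h3, if_neg hxa, if_neg hxb, add_zero]
  · intro q hq hqQ
    exact hwq q hq hqQ

open Filter in
lemma exists_measure [Nontrivial B] (Q : Set B) (δ : ℝ) (hδ : 0 < δ)
    (hQ : ∀ n : ℕ, 0 < n → ∀ s : Fin n → B, (∀ i, s i ∈ Q) → δ ≤ (iotaStar s : ℝ) / (n : ℝ)) :
    ∃ μ : B → ℝ, (∀ b, μ b ∈ Set.Icc (0:ℝ) 1) ∧ μ ⊤ = 1 ∧
      (∀ a b, a ⊓ b = ⊥ → μ (a ⊔ b) = μ a + μ b) ∧ (∀ q ∈ Q, δ ≤ μ q) := by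
  classical
  choose μt hIcc htop hadd hbnd using fun t : Finset B => finite_measure Q δ hδ hQ t
  haveI : (atTop : Filter (Finset B)).NeBot := atTop_neBot
  set U : Ultrafilter (Finset B) := Ultrafilter.of atTop with hU
  have hUle : (U : Filter (Finset B)) ≤ atTop := Ultrafilter.of_le atTop
  have hconv : ∀ b : B, ∃ L ∈ Set.Icc (0:ℝ) 1,
      Filter.Tendsto (fun t => μt t b) U (nhds L) := by
    intro b
    have hle : (U.map (fun t => μt t b) : Filter ℝ) ≤ Filter.principal (Set.Icc 0 1) := by
      rw [Filter.le_principal_iff]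
      exact Filter.mem_map.mpr (Filter.Eventually.of_forall (fun t => hIcc t b))
    obtain ⟨L, hL, h⟩ := isCompact_Icc.ultrafilter_le_nhds (U.map fun t => μt t b) hle
    exact ⟨L, hL, h⟩
  choose Ξ hΞIcc hΞt using hconv
  refine ⟨Ξ, hΞIcc, ?_, ?_, ?_⟩
  · exact tendsto_nhds_unique (hΞt ⊤)
      (Filter.Tendsto.congr (fun t => (htop t).symm) tendsto_const_nhds)
  · intro a b hab
    have h1 : ∀ᶠ t in (U : Filter (Finset B)), μt t (a ⊔ b) = μt t a + μt t b := by
      apply Filter.Eventually.filter_mono hUle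
      apply (Filter.eventually_ge_atTop ({a, b} : Finset B)).mono
      intro t ht
      have ha : a ∈ t := ht (by simp)
      have hb : b ∈ t := ht (by simp)
      exact hadd t a b ha hb hab
    have h2 : Filter.Tendsto (fun t => μt t a + μt t b) U (nhds (Ξ a + Ξ b)) :=
      (hΞt a).add (hΞt b)
    exact tendsto_nhds_unique (hΞt (a ⊔ b)) (Filter.Tendsto.congr' (h1.mono fun t ht => ht.symm) h2)
  · intro q hq
    have h1 : ∀ᶠ t in (U : Filter (Finset B)), δ ≤ μt t q := by
      apply Filter.Eventually.filter_mono hUle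
      apply (Filter.eventually_ge_atTop ({q} : Finset B)).mono
      intro t ht
      exact hbnd t q (ht (by simp)) hq
    exact ge_of_tendsto (hΞt q) h1

lemma forward_dir [Nontrivial B] (Q : ℕ → Set B) (hU : (⋃ n, Q n) = {b : B | b ≠ ⊥})
    (hP : ∀ n, PosIntersectionNumber (Q n)) :
    ∃ Ξ : B → ℝ, (∀ b, Ξ b ∈ Set.Icc (0 : ℝ) 1) ∧ Ξ ⊤ = 1 ∧
      (∀ a b, a ⊓ b = ⊥ → Ξ (a ⊔ b) = Ξ a + Ξ b) ∧
      (∀ b, Ξ b = 0 ↔ b = ⊥) := by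
  classical
  choose δ hδ hbnd using hP
  choose μ hIcc htop hadd hQb using fun n => exists_measure (Q n) (δ n) (hδ n) (hbnd n)
  set Ξ : B → ℝ := fun b => ∑' n : ℕ, (1/2:ℝ)^(n+1) * μ n b with hΞ
  have hgsum : Summable (fun n : ℕ => (1/2:ℝ)^(n+1)) := by
    apply Summable.congr (summable_geometric_two.mul_left (1/2))
    intro n
    rw [pow_succ]
    ring_nf
  have hle1 : ∀ b (n : ℕ), (1/2:ℝ)^(n+1) * μ n b ≤ (1/2:ℝ)^(n+1) := by
    intro b n
    calc (1/2:ℝ)^(n+1) * μ n b ≤ (1/2:ℝ)^(n+1) * 1 :=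
        mul_le_mul_of_nonneg_left (hIcc n b).2 (by positivity)
    _ = (1/2:ℝ)^(n+1) := mul_one _
  have hsummable : ∀ b, Summable (fun n : ℕ => (1/2:ℝ)^(n+1) * μ n b) := by
    intro b
    exact Summable.of_nonneg_of_le (fun n => mul_nonneg (by positivity) (hIcc n b).1)
      (fun n => hle1 b n) hgsum
  have hgeom : ∑' n : ℕ, ((1/2:ℝ))^(n+1) = 1 := by
    have h := tsum_geometric_two' 1
    rw [show (fun n : ℕ => (1/2:ℝ)^(n+1)) = (fun n : ℕ => (1:ℝ) / 2 / 2^n) from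
      funext fun n => by rw [pow_succ, one_div, inv_pow]; ring]
    exact h
  have hterm_nn : ∀ b (n : ℕ), 0 ≤ (1/2:ℝ)^(n+1) * μ n b :=
    fun b n => mul_nonneg (by positivity) (hIcc n b).1
  refine ⟨Ξ, ?_, ?_, ?_, ?_⟩
  · intro b
    constructor
    · exact tsum_nonneg (hterm_nn b)
    · calc Ξ b ≤ ∑' n : ℕ, (1/2:ℝ)^(n+1) :=
          Summable.tsum_le_tsum (fun n => hle1 b n) (hsummable b) hgsum
      _ = 1 := hgeom
  · rw [hΞ]
    simp only
    rw [show (fun n : ℕ => (1/2:ℝ)^(n+1) * μ n ⊤) = fun n : ℕ => (1/2:ℝ)^(n+1) from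
      funext fun n => by rw [htop n, mul_one]]
    exact hgeom
  · intro a b hab
    rw [hΞ]
    simp only
    rw [show (fun n : ℕ => (1/2:ℝ)^(n+1) * μ n (a ⊔ b))
        = fun n : ℕ => (1/2:ℝ)^(n+1) * μ n a + (1/2:ℝ)^(n+1) * μ n b from
      funext fun n => by rw [hadd n a b hab]; ring]
    exact Summable.tsum_add (hsummable a) (hsummable b)
  · intro b
    constructor
    · intro h0
      by_contra hb
      have hbQ : b ∈ ⋃ n, Q n := by rw [hU]; exact hb
      obtain ⟨n, hn⟩ := Set.mem_iUnion.mp hbQ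
      have hterm : (1/2:ℝ)^(n+1) * δ n ≤ (1/2:ℝ)^(n+1) * μ n b :=
        mul_le_mul_of_nonneg_left (hQb n b hn) (by positivity)
      have hle : (1/2:ℝ)^(n+1) * μ n b ≤ Ξ b :=
        Summable.le_tsum (hsummable b) n (fun m _ => hterm_nn b m)
      have hpos : 0 < (1/2:ℝ)^(n+1) * δ n := mul_pos (by positivity) (hδ n)
      rw [h0] at hle
      linarith
    · rintro rfl
      have hb0 : ∀ n, μ n ⊥ = 0 := by
        intro n
        have h := hadd n ⊥ ⊥ (by simp)
        simp at h
        linarith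
      rw [hΞ]
      simp only
      rw [show (fun n : ℕ => (1/2:ℝ)^(n+1) * μ n ⊥) = fun _ : ℕ => (0:ℝ) from
        funext fun n => by rw [hb0 n, mul_zero]]
      exact tsum_zero

end KelleyAux


/-- Kelley. For a Boolean algebra `𝔹`, `𝔹 ∖ {0}` is the union of
countably many subsets each with positive intersection number iff there is a strictly
positive finitely additive measure `Ξ : 𝔹 → [0,1]` with `Ξ(1) = 1`. -/
theorem stmt14 {B : Type u} [BooleanAlgebra B] [Nontrivial B] :
    (∃ Q : ℕ → Set B, (⋃ n, Q n) = { b : B | b ≠ ⊥ } ∧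
      ∀ n, PosIntersectionNumber (Q n)) ↔
    (∃ Ξ : B → ℝ, (∀ b, Ξ b ∈ Set.Icc (0 : ℝ) 1) ∧ Ξ ⊤ = 1 ∧
      (∀ a b, a ⊓ b = ⊥ → Ξ (a ⊔ b) = Ξ a + Ξ b) ∧
      (∀ b, Ξ b = 0 ↔ b = ⊥)) := by
  constructor
  · rintro ⟨Q, hU, hP⟩
    exact KelleyAux.forward_dir Q hU hP
  · rintro ⟨Ξ, h1, h2, h3, h4⟩
    exact KelleyAux.backward_dir Ξ h1 h2 h3 h4
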